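/- Let a ≥ 0 and b ≥ 0 be real numbers and let P > 0 satisfy ln(a·P² + b·P + 1) ≥ 2. Then the function g(Q) = Q / ln(a·Q² + b·Q + 1) is differentiable at P and its derivative at P is strictly positive. Consequently g is strictly increasing on the set {Q > 0 : ln(a·Q² + b·Q + 1) ≥ 2}. -/

import Mathlib

theorem aux_stmt_9 (a b : ℝ) (ha : 0 ≤ a) (hb : 0 ≤ b) (P : ℝ) (hP : 0 < P)
    (hln : 2 ≤ Real.log (a * P ^ 2 + b * P + 1)) :
    DifferentiableAt ℝ (fun Q : ℝ => Q / Real.log (a * Q ^ 2 + b * Q + 1)) P ∧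
      0 < deriv (fun Q : ℝ => Q / Real.log (a * Q ^ 2 + b * Q + 1)) P := by
  have hfP : (0:ℝ) < a * P ^ 2 + b * P + 1 := by positivity
  have hL : (0:ℝ) < Real.log (a * P ^ 2 + b * P + 1) :=
    lt_of_lt_of_le (by norm_num) hln
  have hf : HasDerivAt (fun Q : ℝ => a * Q ^ 2 + b * Q + 1) (2 * a * P + b) P := by
    have h1 := (((hasDerivAt_pow 2 P).const_mul a).add
      ((hasDerivAt_id P).const_mul b)).add_const 1
    refine h1.congr_deriv ?_
    push_cast
    ring
  have hlog : HasDerivAt (fun Q : ℝ => Real.log (a * Q ^ 2 + b * Q + 1))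
      ((2 * a * P + b) / (a * P ^ 2 + b * P + 1)) P := hf.log (ne_of_gt hfP)
  have hg := (hasDerivAt_id' (𝕜 := ℝ) P).div hlog (ne_of_gt hL)
  refine ⟨hg.differentiableAt, ?_⟩
  rw [show (fun Q : ℝ => Q / Real.log (a * Q ^ 2 + b * Q + 1)) =
      ((fun x => x) / fun Q => Real.log (a * Q ^ 2 + b * Q + 1)) from rfl, hg.deriv]
  have hnum : 0 < 1 * Real.log (a * P ^ 2 + b * P + 1)
      - P * ((2 * a * P + b) / (a * P ^ 2 + b * P + 1)) := by
    have h2 : P * ((2 * a * P + b) / (a * P ^ 2 + b * P + 1)) < 2 := by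
      rw [mul_div_assoc', div_lt_iff₀ hfP]
      nlinarith
    linarith
  exact div_pos hnum (by positivity)

/-- High-power monotonicity of the MIMO energy cost `g(Q) = Q / ln(a·Q² + b·Q + 1)`:
at any `P > 0` with `ln(a·P² + b·P + 1) ≥ 2`, `g` is differentiable with strictly
positive derivative, and `g` is strictly increasing on
`{Q > 0 : ln(a·Q² + b·Q + 1) ≥ 2}`. -/
theorem stmt_9 (a b : ℝ) (ha : 0 ≤ a) (hb : 0 ≤ b) (P : ℝ) (hP : 0 < P)
    (hln : 2 ≤ Real.log (a * P ^ 2 + b * P + 1)) :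
    (DifferentiableAt ℝ (fun Q : ℝ => Q / Real.log (a * Q ^ 2 + b * Q + 1)) P ∧
      0 < deriv (fun Q : ℝ => Q / Real.log (a * Q ^ 2 + b * Q + 1)) P) ∧
    StrictMonoOn (fun Q : ℝ => Q / Real.log (a * Q ^ 2 + b * Q + 1))
      {Q : ℝ | 0 < Q ∧ 2 ≤ Real.log (a * Q ^ 2 + b * Q + 1)} := by
  refine ⟨aux_stmt_9 a b ha hb P hP hln, ?_⟩
  intro x hx y hy hxy
  have hx0 : 0 < x := hx.1
  have hstep : ∀ z ∈ Set.Icc x y, 0 < z ∧ 2 ≤ Real.log (a * z ^ 2 + b * z + 1) := by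
    intro z hz
    have hz0 : 0 < z := lt_of_lt_of_le hx0 hz.1
    refine ⟨hz0, le_trans hx.2 (Real.log_le_log (by positivity) ?_)⟩
    linarith [mul_le_mul_of_nonneg_left (pow_le_pow_left₀ hx0.le hz.1 2) ha,
      mul_le_mul_of_nonneg_left hz.1 hb]
  have key : StrictMonoOn (fun Q : ℝ => Q / Real.log (a * Q ^ 2 + b * Q + 1))
      (Set.Icc x y) := by
    apply strictMonoOn_of_deriv_pos (convex_Icc x y)
    · intro z hz
      obtain ⟨hz0, hzl⟩ := hstep z hz
      exact ((aux_stmt_9 a b ha hb z hz0 hzl).1).continuousAt.continuousWithinAt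
    · intro z hz
      rw [interior_Icc] at hz
      have hz' : z ∈ Set.Icc x y := Set.Ioo_subset_Icc_self hz
      obtain ⟨hz0, hzl⟩ := hstep z hz'
      exact (aux_stmt_9 a b ha hb z hz0 hzl).2
  exact key ⟨le_refl x, le_of_lt hxy⟩ ⟨le_of_lt hxy, le_refl y⟩ hxy
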